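/- Let k be a countable field. Then there exists a finitely generated unital associative k-algebra A with Gelfand–Kirillov dimension at most six such that A has a two-sided ideal J in which every element is nilpotent but which is not nilpotent as an ideal, and A has no maximal nilpotent two-sided ideal: for every nilpotent two-sided ideal N of A there exists a nilpotent two-sided ideal N′ of A with N properly contained in N′. -/

import Mathlib

open scoped Pointwise
set_option synthInstance.maxHeartbeats 1000000
set_option maxHeartbeats 1000000


/-- `gkDimLE k A c` expresses that the Gelfand–Kirillov dimension of the unital
associative `k`-algebra `A` is at most `c`: there is a finite-dimensional generating
subspace `V` containing `1` with `limsup_n log(dim V^n)/log n ≤ c`. -/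
noncomputable def gkDimLE (k A : Type) [Field k] [Ring A] [Algebra k A] (c : ℝ) : Prop :=
  ∃ V : Submodule k A,
    Module.Finite k ↥V ∧ (1 : A) ∈ V ∧ Algebra.adjoin k (V : Set A) = ⊤ ∧
    Filter.limsup (fun n : ℕ =>
      ((Real.log (Module.finrank k ↥(V ^ n)) / Real.log n : ℝ) : EReal)) Filter.atTop ≤ (c : EReal)

/-- A two-sided ideal `N` is nilpotent if for some positive `m` every product of `m`
elements of `N` vanishes (i.e. `N ^ m = 0`). -/
def IsNilpotentTwoSidedIdeal {A : Type} [Ring A] (N : TwoSidedIdeal A) : Prop :=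
  ∃ m : ℕ, 0 < m ∧ ∀ f : Fin m → A, (∀ i, f i ∈ N) → (List.ofFn f).prod = 0

noncomputable section
namespace GKW

/-- Words in letters x,y encoded by runs of x's: `xs a` is `x^a`;
`wd a gs b` is `x^a y x^{gs 0} y ⋯ y x^{gs last} y x^b` (#y = gs.length + 1). -/
inductive Wd where
  | xs : ℕ → Wd
  | wd : ℕ → List ℕ → ℕ → Wd
deriving DecidableEq

namespace Wd

instance : Mul Wd :=
  ⟨fun u v => match u, v with
    | xs a, xs b => xs (a+b)
    | xs a, wd c gs d => wd (a+c) gs d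
    | wd a gs b, xs c => wd a gs (b+c)
    | wd a gs b, wd c hs d => wd a (gs ++ (b+c) :: hs) d⟩

@[simp] lemma xs_mul_xs (a b : ℕ) : xs a * xs b = xs (a+b) := rfl
@[simp] lemma xs_mul_wd (a c : ℕ) (gs : List ℕ) (d : ℕ) :
    xs a * wd c gs d = wd (a+c) gs d := rfl
@[simp] lemma wd_mul_xs (a : ℕ) (gs : List ℕ) (b c : ℕ) :
    wd a gs b * xs c = wd a gs (b+c) := rfl
@[simp] lemma wd_mul_wd (a : ℕ) (gs : List ℕ) (b c : ℕ) (hs : List ℕ) (d : ℕ) :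
    wd a gs b * wd c hs d = wd a (gs ++ (b+c) :: hs) d := rfl

instance : One Wd := ⟨xs 0⟩

instance : Monoid Wd where
  mul_assoc u v w := by
    cases u <;> cases v <;> cases w <;>
      simp [add_assoc, List.append_assoc]
  one_mul u := by cases u <;> show xs 0 * _ = _ <;> simp
  mul_one u := by cases u <;> show _ * xs 0 = _ <;> simp

lemma one_def : (1 : Wd) = xs 0 := rfl

/-- The chain condition: each gap is one more than the next. -/
abbrev step (p q : ℕ) : Prop := p = q + 1

/-- Good words: the internal gaps decrease by exactly one. -/
def Good : Wd → Prop
  | xs _ => True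
  | wd _ gs _ => List.Chain' step gs

instance : DecidablePred Good := fun _ => Classical.dec _

@[simp] lemma good_xs (a : ℕ) : Good (xs a) := trivial
@[simp] lemma good_wd (a : ℕ) (gs : List ℕ) (b : ℕ) : Good (wd a gs b) ↔ List.Chain' step gs :=
  Iff.rfl

lemma good_one : Good 1 := trivial

lemma Good.of_mul_left {u v : Wd} (h : Good (u * v)) : Good u := by
  cases u <;> cases v <;> simp_all [Good]
  exact (List.isChain_append.1 h).1

lemma Good.of_mul_right {u v : Wd} (h : Good (u * v)) : Good v := by
  cases u <;> cases v <;> simp_all [Good]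
  exact ((List.isChain_append.1 h).2.1).tail

def countY : Wd → ℕ
  | xs _ => 0
  | wd _ gs _ => gs.length + 1

@[simp] lemma countY_mul (u v : Wd) : countY (u * v) = countY u + countY v := by
  cases u <;> cases v <;> simp [countY] <;> omega

def len : Wd → ℕ
  | xs a => a
  | wd a gs b => a + gs.sum + b + gs.length + 1

@[simp] lemma len_mul (u v : Wd) : len (u * v) = len u + len v := by
  cases u <;> cases v <;> simp [len] <;> omega

def gaps : Wd → List ℕ
  | xs _ => []
  | wd _ gs _ => gs

lemma mem_gaps_mul_left {g : ℕ} {u : Wd} (v : Wd) (h : g ∈ gaps u) : g ∈ gaps (u * v) := by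
  cases u <;> cases v <;> simp_all [gaps]

lemma mem_gaps_mul_right {g : ℕ} (u : Wd) {v : Wd} (h : g ∈ gaps v) : g ∈ gaps (u * v) := by
  cases u <;> cases v <;> simp_all [gaps]

lemma pairwise_gaps {w : Wd} (h : Good w) : (gaps w).Pairwise (· > ·) := by
  cases w with
  | xs a => simp [gaps]
  | wd a gs b =>
    have : List.Chain' (fun p q : ℕ => p > q) gs := by
      refine List.IsChain.imp ?_ h
      intro p q hpq; omega
    exact List.isChain_iff_pairwise.1 this

/-- In a good word the number of gaps is at most the first gap plus 1. -/
lemma length_le_head {gs : List ℕ} (h : List.Chain' step gs) :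
    gs.length ≤ gs.headD 0 + 1 := by
  induction gs with
  | nil => simp
  | cons g t ih =>
    cases t with
    | nil => simp
    | cons g' t' =>
      have h1 : g = g' + 1 := (List.isChain_cons_cons.1 h).1
      have h2 := ih (List.isChain_cons_cons.1 h).2
      simp at h2 ⊢
      omega

end Wd
namespace Wd

/-- A word all of whose runs of x's are short. -/
lemma single_le_sum_gaps {g : ℕ} {gs : List ℕ} (h : g ∈ gs) : g ≤ gs.sum :=
  List.single_le_sum (fun x _ => Nat.zero_le x) g h

lemma mem_gaps_le_len {g : ℕ} {w : Wd} (h : g ∈ gaps w) : g ≤ len w := by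
  cases w with
  | xs a => simp [gaps] at h
  | wd a gs b =>
    simp only [gaps] at h
    have := single_le_sum_gaps h
    simp only [len]; omega

/-- Structure of a product of words each containing a `y` and of length at most `L`. -/
lemma prod_structure (L : ℕ) : ∀ l : List Wd, (∀ w ∈ l, 1 ≤ countY w ∧ len w ≤ L) →
    l ≠ [] → ∃ a gs b, l.prod = wd a gs b ∧ a ≤ L ∧ b ≤ L ∧ (∀ g ∈ gs, g ≤ 2*L) ∧
      l.length ≤ gs.length + 1 := by
  intro l
  induction l with
  | nil => intro _ h; exact absurd rfl h
  | cons w t ih =>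
    intro h _
    obtain ⟨hw1, hw2⟩ := h w (by simp)
    obtain ⟨a, gs, b, hw⟩ : ∃ a gs b, w = wd a gs b := by
      cases w with
      | xs a => simp [countY] at hw1
      | wd a gs b => exact ⟨a, gs, b, rfl⟩
    subst hw
    have hlen : a + gs.sum + b + gs.length + 1 ≤ L := hw2
    have hgs : ∀ g ∈ gs, g ≤ 2*L := by
      intro g hg
      have := single_le_sum_gaps hg
      omega
    rcases eq_or_ne t [] with rfl | ht
    · exact ⟨a, gs, b, by simp, by omega, by omega, hgs, by simp⟩
    · obtain ⟨a', gs', b', hp, ha', hb', hgs', hcnt⟩ :=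
        ih (fun w hw => h w (by simp [hw])) ht
      refine ⟨a, gs ++ (b + a') :: gs', b', ?_, by omega, hb', ?_, ?_⟩
      · rw [List.prod_cons, hp]; simp
      · intro g hg
        rcases List.mem_append.1 hg with hg | hg
        · exact hgs g hg
        · rcases List.mem_cons.1 hg with rfl | hg
          · omega
          · exact hgs' g hg
      · simp at hcnt ⊢
        omega

/-- Long products of short words containing `y` are bad. -/
lemma prod_bad (L : ℕ) (l : List Wd) (h : ∀ w ∈ l, 1 ≤ countY w ∧ len w ≤ L)
    (hl : 2*L + 3 ≤ l.length) : ¬ Good l.prod := by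
  obtain ⟨a, gs, b, hp, _, _, hgs, hcnt⟩ :=
    prod_structure L l h (by intro h0; rw [h0] at hl; simp at hl)
  rw [hp]
  intro hgood
  have hchain : List.Chain' step gs := hgood
  have hle := length_le_head hchain
  have hne : gs ≠ [] := by
    intro h0; rw [h0] at hcnt; simp at hcnt; omega
  have hhd : gs.headD 0 ∈ gs := by
    cases gs with
    | nil => exact absurd rfl hne
    | cons g t => simp
  have := hgs _ hhd
  omega

/-- Two equal gaps cannot both occur in a good word. -/
lemma not_good_two_gaps {g : ℕ} {u z v : Wd} (hu : g ∈ gaps u) (hv : g ∈ gaps v) :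
    ¬ Good (u * (z * v)) := by
  intro hgood
  have hv' : g ∈ gaps (z * v) := mem_gaps_mul_right z hv
  cases u with
  | xs a => simp [gaps] at hu
  | wd a gs b =>
    cases hzv : (z * v) with
    | xs c => rw [hzv] at hv'; simp [gaps] at hv'
    | wd c hs d =>
      rw [hzv] at hv' hgood
      simp only [gaps] at hu hv'
      rw [wd_mul_wd] at hgood
      have hp := pairwise_gaps hgood
      simp only [gaps] at hp
      have := (List.pairwise_append.1 hp).2.2 g hu g (List.mem_cons_of_mem _ hv')
      omega

/-- The strictly decreasing list `[r, r-1, ..., 1, 0]`. -/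
def D : ℕ → List ℕ
  | 0 => [0]
  | (r+1) => (r+1) :: D r

lemma D_headD : ∀ r, (D r).headD 0 = r
  | 0 => rfl
  | (_+1) => rfl

lemma D_ne_nil (r : ℕ) : D r ≠ [] := by
  cases r <;> simp [D]

lemma chain_D : ∀ r, List.Chain' step (D r) := by
  intro r
  induction r with
  | zero => exact List.isChain_singleton _
  | succ n ih =>
    rw [D]; show List.IsChain step ((n+1) :: D n); rw [List.isChain_cons]
    refine ⟨?_, ih⟩
    intro y hy
    cases n with
    | zero => simp [D] at hy; simp [hy, step]
    | succ p => simp [D] at hy; simp [hy, step]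

/-- The good witness word with many y's. -/
def Pw (j : ℕ) : Wd := wd 0 (D (2*j+1)) 0

lemma good_Pw (j : ℕ) : Good (Pw j) := by
  rw [Pw, good_wd]; exact chain_D _

lemma D_two_step (r : ℕ) : D (r+2) = (r+2) :: (r+1) :: D r := rfl

/-- Factorization of `Pw j` into `j+1` words each with at least two y's. -/
def factorList : ℕ → List Wd
  | 0 => [wd 0 [1, 0] 0]
  | (j+1) => wd 0 [2*j+3] (2*j+2) :: factorList j

lemma factorList_length : ∀ j, (factorList j).length = j + 1
  | 0 => rfl
  | (j+1) => by simp [factorList, factorList_length j]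

lemma factorList_prod : ∀ j, (factorList j).prod = Pw j := by
  intro j
  induction j with
  | zero => simp [factorList, Pw]; rfl
  | succ n ih =>
    rw [factorList, List.prod_cons, ih]
    show _ * wd 0 (D (2*n+1)) 0 = _
    rw [Pw, wd_mul_wd, show 2*(n+1)+1 = (2*n+1)+2 from by ring, D_two_step]
    norm_num

lemma factorList_decomp : ∀ j, ∀ w ∈ factorList j, ∃ i v, w = wd 0 [i] 0 * v := by
  intro j
  induction j with
  | zero =>
    intro w hw
    simp [factorList] at hw
    exact ⟨1, wd 0 [] 0, by rw [hw]; simp⟩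
  | succ n ih =>
    intro w hw
    rw [factorList] at hw
    rcases List.mem_cons.1 hw with rfl | hw
    · exact ⟨2*n+3, xs (2*n+2), by simp⟩
    · exact ih w hw

lemma factorList_countY : ∀ j, ∀ w ∈ factorList j, 2 ≤ countY w := by
  intro j w hw
  obtain ⟨i, v, rfl⟩ := factorList_decomp j w hw
  rw [countY_mul]
  have : countY (wd 0 [i] 0) = 2 := rfl
  omega

end Wd

end GKW

namespace GKW
open Wd

variable (k : Type) [Field k]

/-- Index type: good words. -/
def GW : Type := {w : Wd // Good w}

/-- The module on which our algebra acts: functions on good words. -/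
def VV : Type := GW → k

noncomputable instance : AddCommGroup (VV k) := inferInstanceAs (AddCommGroup (GW → k))
noncomputable instance : Module k (VV k) := inferInstanceAs (Module k (GW → k))

/-- The operator associated to a word `u`: precomposition with right multiplication by `u`
(truncated at bad words). -/
def T (u : Wd) : Module.End k (VV k) where
  toFun f := fun gw => if h : Good (gw.1 * u) then f ⟨gw.1 * u, h⟩ else 0
  map_add' f g := by
    funext gw
    show (if h : Good (gw.1 * u) then (f + g) ⟨gw.1 * u, h⟩ else 0)
        = (if h : Good (gw.1 * u) then f ⟨gw.1 * u, h⟩ else 0)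
          + (if h : Good (gw.1 * u) then g ⟨gw.1 * u, h⟩ else 0)
    by_cases h : Good (gw.1 * u)
    · rw [dif_pos h, dif_pos h, dif_pos h]; rfl
    · rw [dif_neg h, dif_neg h, dif_neg h, add_zero]
  map_smul' c f := by
    funext gw
    show (if h : Good (gw.1 * u) then (c • f) ⟨gw.1 * u, h⟩ else 0)
        = c • (if h : Good (gw.1 * u) then f ⟨gw.1 * u, h⟩ else 0)
    by_cases h : Good (gw.1 * u)
    · rw [dif_pos h, dif_pos h]; rfl
    · rw [dif_neg h, dif_neg h, smul_zero]

lemma T_apply (u : Wd) (f : VV k) (gw : GW) :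
    T k u f gw = if h : Good (gw.1 * u) then f ⟨gw.1 * u, h⟩ else 0 := rfl

lemma T_one : T k 1 = 1 := by
  refine LinearMap.ext fun f => ?_
  funext gw
  rw [T_apply, dif_pos (by rw [mul_one]; exact gw.2)]
  show f _ = f gw
  congr 1
  exact Subtype.ext (mul_one gw.1)

lemma T_mul (u v : Wd) : T k (u * v) = T k u * T k v := by
  refine LinearMap.ext fun f => ?_
  funext gw
  show _ = T k u (T k v f) gw
  rw [T_apply, T_apply]
  by_cases h : Good (gw.1 * u)
  · rw [dif_pos h]; show _ = (if h' : Good ((gw.1 * u) * v) then f ⟨(gw.1 * u) * v, h'⟩ else 0)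
    by_cases h2 : Good ((gw.1 * u) * v)
    · rw [dif_pos h2, dif_pos (by rwa [← mul_assoc])]
      congr 1
      exact Subtype.ext (mul_assoc gw.1 u v).symm
    · rw [dif_neg h2, dif_neg (by rw [← mul_assoc]; exact h2)]
  · rw [dif_neg h, dif_neg (fun hg => h (by rw [← mul_assoc] at hg; exact hg.of_mul_left))]

/-- `T` as a monoid hom. -/
def Tm : Wd →* Module.End k (VV k) where
  toFun := T k
  map_one' := T_one k
  map_mul' := T_mul k

lemma T_pow (u : Wd) (n : ℕ) : T k (u ^ n) = (T k u) ^ n := map_pow (Tm k) u n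

lemma T_eq_zero_of_bad {w : Wd} (h : ¬ Good w) : T k w = 0 := by
  refine LinearMap.ext fun f => ?_
  funext gw
  rw [T_apply, dif_neg (fun hg => h hg.of_mul_right)]
  rfl

/-- the indicator function of a good word -/
def delta (w : Wd) : VV k := fun gw => if gw.1 = w then 1 else 0

lemma T_ne_zero_of_good {w : Wd} (h : Good w) : T k w ≠ 0 := by
  intro h0
  have h1 : Good ((1 : Wd) * w) := by rwa [one_mul]
  have h2 : T k w (delta k w) ⟨1, good_one⟩ = 0 := by rw [h0]; rfl
  replace h2 : (if h : Good ((1 : Wd) * w) then delta k w ⟨(1:Wd) * w, h⟩ else 0) = 0 := h2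
  rw [dif_pos h1] at h2
  have h3 : delta k w ⟨(1 : Wd) * w, h1⟩ = (0 : k) := h2
  replace h3 : (if (1 : Wd) * w = w then (1 : k) else 0) = 0 := h3
  rw [if_pos (one_mul w)] at h3
  exact one_ne_zero h3

/-- letters -/
def wx : Wd := xs 1
def wy : Wd := wd 0 [] 0

lemma xs_eq_pow (a : ℕ) : xs a = wx ^ a := by
  induction a with
  | zero => rfl
  | succ n ih => rw [pow_succ, ← ih]; show _ = xs n * xs 1; simp

lemma wd_zero_decomp (gs : List ℕ) (b : ℕ) :
    wd 0 gs b = wy * (match gs with | [] => xs b | g :: t => xs g * wd 0 t b) := by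
  cases gs with
  | nil => show _ = wd 0 [] 0 * xs b; simp
  | cons g t =>
    show _ = wd 0 [] 0 * (xs g * wd 0 t b)
    simp

lemma wd_decomp (a : ℕ) (gs : List ℕ) (b : ℕ) :
    wd a gs b = xs a * wd 0 gs b := by simp

/-- The algebra. -/
noncomputable def SA : Subalgebra k (Module.End k (VV k)) := Algebra.adjoin k {T k wx, T k wy}

lemma T_mem_SA : ∀ w : Wd, T k w ∈ SA k := by
  have hx : T k wx ∈ SA k := Algebra.subset_adjoin (by simp)
  have hy : T k wy ∈ SA k := Algebra.subset_adjoin (by simp)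
  have hxs : ∀ a : ℕ, T k (xs a) ∈ SA k := by
    intro a
    rw [xs_eq_pow, T_pow]
    exact pow_mem hx a
  have key : ∀ gs : List ℕ, ∀ b : ℕ, T k (wd 0 gs b) ∈ SA k := by
    intro gs
    induction gs with
    | nil =>
      intro b
      rw [wd_zero_decomp, T_mul]
      exact mul_mem hy (hxs b)
    | cons g t ih =>
      intro b
      rw [wd_zero_decomp]
      show T k (wy * (xs g * wd 0 t b)) ∈ SA k
      rw [T_mul, T_mul]
      exact mul_mem hy (mul_mem (hxs g) (ih b))
  intro w
  cases w with
  | xs a => exact hxs a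
  | wd a gs b =>
    rw [wd_decomp, T_mul]
    exact mul_mem (hxs a) (key gs b)

/-- The finitely generated algebra. -/
def AA : Type := ↥(SA k)

noncomputable instance instRingAA : Ring (AA k) := inferInstanceAs (Ring ↥(SA k))
noncomputable instance instAlgebraAA : Algebra k (AA k) := inferInstanceAs (Algebra k ↥(SA k))

/-- Words as elements of `AA`. -/
noncomputable def eW (w : Wd) : AA k := ⟨T k w, T_mem_SA k w⟩

@[simp] lemma eW_val (w : Wd) : (eW k w).1 = T k w := rfl

lemma eW_one : eW k 1 = 1 := by
  apply Subtype.ext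
  show T k 1 = _
  rw [T_one]; rfl

lemma eW_mul (u v : Wd) : eW k (u * v) = eW k u * eW k v := by
  apply Subtype.ext
  show T k (u * v) = T k u * T k v
  exact T_mul k u v

/-- `eW` as a monoid hom. -/
noncomputable def eWm : Wd →* AA k where
  toFun := eW k
  map_one' := eW_one k
  map_mul' := eW_mul k

lemma eW_eq_zero {w : Wd} (h : ¬ Good w) : eW k w = 0 := by
  apply Subtype.ext
  show T k w = 0
  exact T_eq_zero_of_bad k h

lemma eW_ne_zero {w : Wd} (h : Good w) : eW k w ≠ 0 := by
  intro h0
  exact T_ne_zero_of_good k h (congrArg Subtype.val h0)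

lemma range_mul_subset :
    Set.range (eW k) * Set.range (eW k) ⊆ Set.range (eW k) := by
  rintro z hz
  rw [Set.mem_mul] at hz
  obtain ⟨x, ⟨u, rfl⟩, y, ⟨v, rfl⟩, rfl⟩ := hz
  exact ⟨u * v, eW_mul k u v⟩

lemma mul_mem_span_range {a b : AA k}
    (ha : a ∈ Submodule.span k (Set.range (eW k)))
    (hb : b ∈ Submodule.span k (Set.range (eW k))) :
    a * b ∈ Submodule.span k (Set.range (eW k)) := by
  have h := Submodule.mul_mem_mul ha hb
  rw [Submodule.span_mul_span] at h
  exact Submodule.span_mono (range_mul_subset k) h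

/-- Everything is a span of word operators. -/
lemma top_eq_span : (⊤ : Submodule k (AA k)) = Submodule.span k (Set.range (eW k)) := by
  refine le_antisymm (fun a _ => ?_) le_top
  obtain ⟨x, hx⟩ := a
  refine Algebra.adjoin_induction
    (p := fun x hx => (⟨x, hx⟩ : AA k) ∈ Submodule.span k (Set.range (eW k)))
    ?_ ?_ ?_ ?_ hx
  · intro x hx
    rcases hx with h | h
    · exact Submodule.subset_span ⟨wx, Subtype.ext h.symm⟩
    · exact Submodule.subset_span ⟨wy, Subtype.ext ((Set.mem_singleton_iff.1 h).symm)⟩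
  · intro r
    have h1 : (⟨algebraMap k _ r, Subalgebra.algebraMap_mem _ r⟩ : AA k)
        = r • (1 : AA k) := by
      apply Subtype.ext
      show algebraMap k _ r = r • (1 : Module.End k (VV k))
      rw [Algebra.algebraMap_eq_smul_one]
    rw [h1, ← eW_one]
    exact Submodule.smul_mem (Submodule.span k (Set.range (eW k))) r (Submodule.subset_span ⟨1, rfl⟩)
  · intro x y hx hy hpx hpy
    exact Submodule.add_mem _ hpx hpy
  · intro x y hx hy hpx hpy
    exact mul_mem_span_range k hpx hpy

lemma mem_span_range (a : AA k) : a ∈ Submodule.span k (Set.range (eW k)) := by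
  rw [← top_eq_span]; trivial


open Wd

variable (k : Type) [Field k]

/-- all words of length at most `L` -/
def Wset (L : ℕ) : Set (AA k) := eW k '' {w | len w ≤ L}
/-- words with at least 2 y's and length at most `L` -/
def Eset (L : ℕ) : Set (AA k) := eW k '' {w | 2 ≤ countY w ∧ len w ≤ L}
/-- words containing the gap `s` -/
def Iset (s : ℕ) : Set (AA k) := eW k '' {w | s ∈ gaps w}

lemma Wset_mono {L L' : ℕ} (h : L ≤ L') : Wset k L ⊆ Wset k L' :=
  Set.image_mono (fun w hw => le_trans hw h)

lemma Eset_mono {L L' : ℕ} (h : L ≤ L') : Eset k L ⊆ Eset k L' :=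
  Set.image_mono (fun w hw => ⟨hw.1, le_trans hw.2 h⟩)

lemma exists_L (x : AA k) : ∃ L, x ∈ Submodule.span k (Wset k L) := by
  refine Submodule.span_induction ?_ ?_ ?_ ?_ (mem_span_range k x)
  · rintro a ⟨w, rfl⟩
    exact ⟨len w, Submodule.subset_span ⟨w, by simp, rfl⟩⟩
  · exact ⟨0, zero_mem _⟩
  · rintro a b _ _ ⟨L1, h1⟩ ⟨L2, h2⟩
    exact ⟨max L1 L2, add_mem
      (Submodule.span_mono (Wset_mono k (le_max_left L1 L2)) h1)
      (Submodule.span_mono (Wset_mono k (le_max_right L1 L2)) h2)⟩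
  · rintro c a _ ⟨L, h⟩
    exact ⟨L, Submodule.smul_mem _ c h⟩

lemma Wset_mul_Eset (L' L : ℕ) : Wset k L' * Eset k L ⊆ Eset k (L' + L) := by
  rintro z hz
  rw [Set.mem_mul] at hz
  obtain ⟨x, ⟨u, hu, rfl⟩, y, ⟨v, hv, rfl⟩, rfl⟩ := hz
  simp only [Set.mem_setOf_eq] at hu hv
  refine ⟨u * v, ⟨?_, ?_⟩, eW_mul k u v⟩
  · rw [countY_mul]; omega
  · rw [len_mul]; omega

lemma Eset_mul_Wset (L L' : ℕ) : Eset k L * Wset k L' ⊆ Eset k (L + L') := by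
  rintro z hz
  rw [Set.mem_mul] at hz
  obtain ⟨x, ⟨u, hu, rfl⟩, y, ⟨v, hv, rfl⟩, rfl⟩ := hz
  simp only [Set.mem_setOf_eq] at hu hv
  refine ⟨u * v, ⟨?_, ?_⟩, eW_mul k u v⟩
  · rw [countY_mul]; omega
  · rw [len_mul]; omega

/-- The nil but non-nilpotent two-sided ideal. -/
noncomputable def J : TwoSidedIdeal (AA k) :=
  TwoSidedIdeal.mk' {a | ∃ L, a ∈ Submodule.span k (Eset k L)}
    ⟨0, zero_mem _⟩
    (by rintro a b ⟨L1, h1⟩ ⟨L2, h2⟩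
        exact ⟨max L1 L2, add_mem
          (Submodule.span_mono (Eset_mono k (le_max_left L1 L2)) h1)
          (Submodule.span_mono (Eset_mono k (le_max_right L1 L2)) h2)⟩)
    (by rintro a ⟨L, h⟩; exact ⟨L, neg_mem h⟩)
    (by rintro x a ⟨L, h⟩
        obtain ⟨L', hx⟩ := exists_L k x
        refine ⟨L' + L, ?_⟩
        have := Submodule.mul_mem_mul hx h
        rw [Submodule.span_mul_span] at this
        exact Submodule.span_mono (Wset_mul_Eset k L' L) this)
    (by rintro a x ⟨L, h⟩
        obtain ⟨L', hx⟩ := exists_L k x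
        refine ⟨L + L', ?_⟩
        have := Submodule.mul_mem_mul h hx
        rw [Submodule.span_mul_span] at this
        exact Submodule.span_mono (Eset_mul_Wset k L L') this)

lemma mem_J_iff (a : AA k) : a ∈ J k ↔ ∃ L, a ∈ Submodule.span k (Eset k L) :=
  TwoSidedIdeal.mem_mk' _ _ _ _ _ _ a

lemma eW_mem_J {w : Wd} (h : 2 ≤ countY w) : eW k w ∈ J k := by
  rw [mem_J_iff]
  exact ⟨len w, Submodule.subset_span ⟨w, ⟨h, le_refl _⟩, rfl⟩⟩

/-- products of `2L+3` elements of `Eset L` vanish -/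
lemma Eset_pow_eq_zero (L : ℕ) :
    (Eset k L) ^ (2*L+3) ⊆ (0 : Set (AA k)) := by
  intro z hz
  rw [Set.mem_pow] at hz
  obtain ⟨f, hf⟩ := hz
  have hch : ∀ i, ∃ w : Wd, (2 ≤ countY w ∧ len w ≤ L) ∧ eW k w = (f i : AA k) :=
    fun i => (f i).2
  choose w hw heq using hch
  have h1 : (fun i => (f i : AA k)) = fun i => eW k (w i) := funext fun i => (heq i).symm
  rw [h1] at hf
  have h2 : (List.ofFn fun i => eW k (w i)) = (List.ofFn w).map (eW k) := by
    rw [List.map_ofFn]; rfl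
  have h3 : ((List.ofFn w).map (eW k)).prod = eW k (List.ofFn w).prod := by
    exact (map_list_prod (eWm k) _).symm
  have hbad : ¬ Good (List.ofFn w).prod := by
    refine prod_bad L _ ?_ ?_
    · intro u hu
      rw [List.mem_ofFn] at hu
      obtain ⟨i, rfl⟩ := hu
      exact ⟨le_trans (by omega) (hw i).1, (hw i).2⟩
    · rw [List.length_ofFn]
  rw [← hf, h2, h3]
  exact Set.mem_singleton_iff.2 (eW_eq_zero k hbad)

lemma J_nil : ∀ x ∈ J k, IsNilpotent x := by
  intro x hx
  rw [mem_J_iff] at hx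
  obtain ⟨L, hx⟩ := hx
  refine ⟨2*L+3, ?_⟩
  have h1 : x ^ (2*L+3) ∈ Submodule.span k (Eset k L) ^ (2*L+3) :=
    Submodule.pow_mem_pow _ hx _
  rw [Submodule.span_pow] at h1
  have h2 : Submodule.span k ((Eset k L) ^ (2*L+3)) ≤ Submodule.span k {(0 : AA k)} :=
    Submodule.span_mono (Eset_pow_eq_zero k L)
  have h3 := h2 h1
  rwa [Submodule.span_zero_singleton, Submodule.mem_bot] at h3

lemma exists_fun_of_list {α : Type} {m : ℕ} (l : List α) (hl : l.length = m) :
    ∃ f : Fin m → α, List.ofFn f = l := by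
  subst hl; exact ⟨l.get, List.ofFn_get l⟩

lemma eW_factorList_prod (j : ℕ) :
    ((factorList j).map (eW k)).prod = eW k (Pw j) := by
  rw [← factorList_prod j]
  exact (map_list_prod (eWm k) _).symm

lemma J_not_nilpotent : ¬ IsNilpotentTwoSidedIdeal (J k) := by
  rintro ⟨m, hm, hf⟩
  obtain ⟨m', rfl⟩ : ∃ m', m = m' + 1 := ⟨m - 1, by omega⟩
  obtain ⟨f, hfl⟩ := exists_fun_of_list ((factorList m').map (eW k))
    (by rw [List.length_map, factorList_length])
  have hmem : ∀ i, f i ∈ J k := by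
    intro i
    have h1 : f i ∈ List.ofFn f := by rw [List.mem_ofFn]; exact ⟨i, rfl⟩
    rw [hfl, List.mem_map] at h1
    obtain ⟨w, hw, heq⟩ := h1
    rw [← heq]
    exact eW_mem_J k (factorList_countY _ w hw)
  have h0 := hf f hmem
  rw [hfl, eW_factorList_prod] at h0
  exact eW_ne_zero k (good_Pw m') h0


lemma le_top_mul (p : Submodule k (AA k)) : p ≤ ⊤ * p := by
  conv_lhs => rw [← one_mul p]
  exact mul_le_mul' le_top le_rfl

lemma list_prod_mem_pow (p : Submodule k (AA k)) :
    ∀ l : List (AA k), (∀ a ∈ l, a ∈ p) → l.prod ∈ p ^ l.length := by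
  intro l
  induction l with
  | nil =>
    intro _
    rw [List.prod_nil, List.length_nil, pow_zero]
    exact Submodule.one_le.1 le_rfl
  | cons a t ih =>
    intro h
    rw [List.prod_cons, List.length_cons, pow_succ']
    exact Submodule.mul_mem_mul (h a (by simp)) (ih (fun b hb => h b (by simp [hb])))

lemma span_pow_eq_bot {S : Set (AA k)} {m : ℕ}
    (h : ∀ f : Fin m → AA k, (∀ i, (f i : AA k) ∈ S) → (List.ofFn f).prod = 0) :
    Submodule.span k S ^ m = ⊥ := by
  rw [Submodule.span_pow, eq_bot_iff]
  refine (Submodule.span_le).2 ?_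
  intro z hz
  rw [Set.mem_pow] at hz
  obtain ⟨f, hf⟩ := hz
  have h0 := h (fun i => (f i : AA k)) (fun i => (f i).2)
  rw [hf] at h0
  simp [h0]

/-- center annihilation: words with a common gap on both sides kill everything between. -/
lemma eW_mid_zero {s : ℕ} {u w : Wd} (hu : s ∈ gaps u) (hw : s ∈ gaps w) (t : AA k) :
    eW k u * t * eW k w = 0 := by
  refine Submodule.span_induction ?_ ?_ ?_ ?_ (mem_span_range k t)
  · rintro a ⟨z, rfl⟩
    rw [mul_assoc, ← eW_mul, ← eW_mul]
    exact eW_eq_zero k (not_good_two_gaps hu hw)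
  · simp
  · intro a b _ _ ha hb
    rw [mul_add, add_mul, ha, hb, add_zero]
  · intro c a _ ha
    rw [mul_smul_comm, smul_mul_assoc, ha, smul_zero]

lemma iN_top_iN (s : ℕ) :
    Submodule.span k (Iset k s) * ⊤ * Submodule.span k (Iset k s) = ⊥ := by
  rw [eq_bot_iff]
  refine Submodule.mul_le.2 (fun z hz y hy => ?_)
  rw [Submodule.mem_bot]
  have key : ∀ z', z' ∈ Submodule.span k (Iset k s) * (⊤ : Submodule k (AA k)) →
      ∀ y', y' ∈ Submodule.span k (Iset k s) → z' * y' = 0 := by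
    intro z' hz'
    refine Submodule.mul_induction_on hz' ?_ ?_
    · intro x hx t _
      -- reduce x over the span
      refine Submodule.span_induction (p := fun x _ => ∀ y', y' ∈ Submodule.span k (Iset k s) →
        x * t * y' = 0) ?_ ?_ ?_ ?_ hx
      · rintro a ⟨u, hu, rfl⟩ y' hy'
        refine Submodule.span_induction (p := fun y' _ => eW k u * t * y' = 0) ?_ ?_ ?_ ?_ hy'
        · rintro b ⟨w, hw, rfl⟩
          exact eW_mid_zero k hu hw t
        · simp
        · intro a b _ _ ha hb; rw [mul_add, ha, hb, add_zero]
        · intro c a _ ha; rw [mul_smul_comm, ha, smul_zero]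
      · intro y' _; simp
      · intro a b _ _ ha hb y' hy'
        rw [add_mul, add_mul, ha y' hy', hb y' hy', add_zero]
      · intro c a _ ha y' hy'
        rw [smul_mul_assoc, smul_mul_assoc, ha y' hy', smul_zero]
    · intro x1 x2 h1 h2 y' hy'
      rw [add_mul, h1 y' hy', h2 y' hy', add_zero]
  exact key z hz y hy

section ZDev

variable (nn ii : Submodule k (AA k))

/-- words in the expansion of `(nn ⊔ ii)^j` containing at least one `ii` factor. -/
def Zf : ℕ → Submodule k (AA k)
  | 0 => ⊥
  | (j+1) => nn * Zf j ⊔ ii * nn ^ j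

lemma Zf_le_tit : ∀ j, Zf k nn ii j ≤ ⊤ * (ii * ⊤) := by
  intro j
  induction j with
  | zero => exact bot_le
  | succ n ih =>
    rw [Zf]
    refine sup_le ?_ ?_
    · calc nn * Zf k nn ii n ≤ nn * (⊤ * (ii * ⊤)) := mul_le_mul' le_rfl ih
        _ = (nn * ⊤) * (ii * ⊤) := (mul_assoc _ _ _).symm
        _ ≤ ⊤ * (ii * ⊤) := mul_le_mul' le_top le_rfl
    · calc ii * nn ^ n ≤ ii * ⊤ := mul_le_mul' le_rfl le_top
        _ ≤ ⊤ * (ii * ⊤) := le_top_mul k _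

lemma ii_mul_Zf (hIT : ii * ⊤ * ii = ⊥) (j : ℕ) : ii * Zf k nn ii j = ⊥ := by
  rw [eq_bot_iff]
  calc ii * Zf k nn ii j ≤ ii * (⊤ * (ii * ⊤)) := mul_le_mul' le_rfl (Zf_le_tit k nn ii j)
    _ = (ii * ⊤ * ii) * ⊤ := by rw [mul_assoc, mul_assoc]
    _ = ⊥ := by rw [hIT, Submodule.bot_mul]

lemma sup_pow_le (hIT : ii * ⊤ * ii = ⊥) :
    ∀ j, (nn ⊔ ii) ^ j ≤ nn ^ j ⊔ Zf k nn ii j := by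
  intro j
  induction j with
  | zero => rw [pow_zero, pow_zero]; exact le_sup_left
  | succ n ih =>
    rw [pow_succ']
    calc (nn ⊔ ii) * (nn ⊔ ii) ^ n ≤ (nn ⊔ ii) * (nn ^ n ⊔ Zf k nn ii n) :=
          mul_le_mul' le_rfl ih
      _ = nn * nn ^ n ⊔ nn * Zf k nn ii n ⊔ (ii * nn ^ n ⊔ ii * Zf k nn ii n) := by
          rw [Submodule.sup_mul, Submodule.mul_sup, Submodule.mul_sup]
      _ ≤ nn ^ (n+1) ⊔ Zf k nn ii (n+1) := by
          rw [ii_mul_Zf k nn ii hIT, ← pow_succ', Zf]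
          refine sup_le (sup_le le_sup_left ?_) (sup_le ?_ bot_le)
          · exact le_trans le_sup_left le_sup_right
          · exact le_trans le_sup_right le_sup_right

lemma Zf_bound (m : ℕ) :
    ∀ j, Zf k nn ii j ≤ (⊤ * nn ^ m) ⊔ (nn ^ (j - (m+1)) * (⊤ * (ii * ⊤))) := by
  intro j
  induction j with
  | zero => exact bot_le
  | succ n ih =>
    rw [Zf]
    refine sup_le ?_ ?_
    · calc nn * Zf k nn ii n
          ≤ nn * ((⊤ * nn ^ m) ⊔ (nn ^ (n - (m+1)) * (⊤ * (ii * ⊤)))) :=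
            mul_le_mul' le_rfl ih
        _ = nn * (⊤ * nn ^ m) ⊔ nn * (nn ^ (n - (m+1)) * (⊤ * (ii * ⊤))) := by
            rw [Submodule.mul_sup]
        _ ≤ (⊤ * nn ^ m) ⊔ (nn ^ (n + 1 - (m+1)) * (⊤ * (ii * ⊤))) := by
            refine sup_le (le_trans ?_ le_sup_left) (le_trans ?_ le_sup_right)
            · calc nn * (⊤ * nn ^ m) = (nn * ⊤) * nn ^ m := (mul_assoc _ _ _).symm
                _ ≤ ⊤ * nn ^ m := mul_le_mul' le_top le_rfl
            · rcases le_or_gt (m+1) n with hc | hc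
              · have : nn * (nn ^ (n - (m+1)) * (⊤ * (ii * ⊤)))
                    = nn ^ (n - (m+1) + 1) * (⊤ * (ii * ⊤)) := by
                  rw [← mul_assoc, ← pow_succ']
                rw [this, show n - (m+1) + 1 = n + 1 - (m+1) from by omega]
              · have h0 : n - (m+1) = 0 := by omega
                have h1 : n + 1 - (m+1) = 0 ∨ n + 1 - (m+1) = n - m := by omega
                rw [h0, pow_zero, one_mul]
                have : nn * (⊤ * (ii * ⊤)) ≤ ⊤ * (ii * ⊤) := by
                  calc nn * (⊤ * (ii * ⊤)) = (nn * ⊤) * (ii * ⊤) := (mul_assoc _ _ _).symm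
                    _ ≤ ⊤ * (ii * ⊤) := mul_le_mul' le_top le_rfl
                refine le_trans this ?_
                rcases h1 with h1 | h1 <;> rw [h1]
                · rw [pow_zero, one_mul]
                · have h2 : n - m = 0 := by omega
                  rw [h2, pow_zero, one_mul]
    · rcases le_or_gt m n with hc | hc
      · refine le_trans ?_ le_sup_left
        calc ii * nn ^ n = ii * (nn ^ (n - m) * nn ^ m) := by
              rw [← pow_add, show n - m + m = n from by omega]
          _ = (ii * nn ^ (n - m)) * nn ^ m := (mul_assoc _ _ _).symm
          _ ≤ ⊤ * nn ^ m := mul_le_mul' le_top le_rfl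
      · refine le_trans ?_ le_sup_right
        have h0 : n + 1 - (m+1) = 0 := by omega
        rw [h0, pow_zero, one_mul]
        calc ii * nn ^ n ≤ ii * ⊤ := mul_le_mul' le_rfl le_top
          _ ≤ ⊤ * (ii * ⊤) := le_top_mul k _

lemma sup_pow_eq_bot {m : ℕ} (hm : 0 < m) (hnn : nn ^ m = ⊥) (hIT : ii * ⊤ * ii = ⊥) :
    (nn ⊔ ii) ^ (2*m+1) = ⊥ := by
  rw [eq_bot_iff]
  refine le_trans (sup_pow_le k nn ii hIT _) ?_
  refine sup_le ?_ ?_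
  · have : nn ^ (2*m+1) = nn ^ m * nn ^ (m+1) := by rw [← pow_add]; ring_nf
    rw [this, hnn, Submodule.bot_mul]
  · refine le_trans (Zf_bound k nn ii m _) ?_
    rw [show 2*m+1 - (m+1) = m from by omega, hnn]
    simp [Submodule.mul_bot, Submodule.bot_mul]

end ZDev


lemma span_N_mul_closed (N : TwoSidedIdeal (AA k)) (x : AA k) {y : AA k}
    (hy : y ∈ Submodule.span k (N : Set (AA k))) :
    x * y ∈ Submodule.span k (N : Set (AA k)) ∧
      y * x ∈ Submodule.span k (N : Set (AA k)) := by
  refine Submodule.span_induction ?_ ?_ ?_ ?_ hy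
  · intro z hz
    rw [SetLike.mem_coe] at hz
    exact ⟨Submodule.subset_span (by rw [SetLike.mem_coe]; exact N.mul_mem_left x z hz),
      Submodule.subset_span (by rw [SetLike.mem_coe]; exact N.mul_mem_right z x hz)⟩
  · simp
  · intro a b _ _ ha hb
    exact ⟨by rw [mul_add]; exact add_mem ha.1 hb.1, by rw [add_mul]; exact add_mem ha.2 hb.2⟩
  · intro c a _ ha
    exact ⟨by rw [mul_smul_comm]; exact Submodule.smul_mem _ c ha.1,
      by rw [smul_mul_assoc]; exact Submodule.smul_mem _ c ha.2⟩

lemma span_Iset_mul_closed (s : ℕ) (x : AA k) {y : AA k}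
    (hy : y ∈ Submodule.span k (Iset k s)) :
    x * y ∈ Submodule.span k (Iset k s) ∧ y * x ∈ Submodule.span k (Iset k s) := by
  refine Submodule.span_induction ?_ ?_ ?_ ?_ hy
  · rintro a ⟨w, hw, rfl⟩
    simp only [Set.mem_setOf_eq] at hw
    constructor
    · refine Submodule.span_induction (p := fun x _ => x * eW k w ∈ Submodule.span k (Iset k s))
        ?_ ?_ ?_ ?_ (mem_span_range k x)
      · rintro b ⟨v, rfl⟩
        rw [← eW_mul]
        exact Submodule.subset_span ⟨v * w, mem_gaps_mul_right v hw, rfl⟩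
      · simp
      · intro a b _ _ ha hb; rw [add_mul]; exact add_mem ha hb
      · intro c a _ ha; rw [smul_mul_assoc]; exact Submodule.smul_mem _ c ha
    · refine Submodule.span_induction (p := fun x _ => eW k w * x ∈ Submodule.span k (Iset k s))
        ?_ ?_ ?_ ?_ (mem_span_range k x)
      · rintro b ⟨v, rfl⟩
        rw [← eW_mul]
        exact Submodule.subset_span ⟨w * v, mem_gaps_mul_left v hw, rfl⟩
      · simp
      · intro a b _ _ ha hb; rw [mul_add]; exact add_mem ha hb
      · intro c a _ ha; rw [mul_smul_comm]; exact Submodule.smul_mem _ c ha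
  · simp
  · intro a b _ _ ha hb
    exact ⟨by rw [mul_add]; exact add_mem ha.1 hb.1, by rw [add_mul]; exact add_mem ha.2 hb.2⟩
  · intro c a _ ha
    exact ⟨by rw [mul_smul_comm]; exact Submodule.smul_mem _ c ha.1,
      by rw [smul_mul_assoc]; exact Submodule.smul_mem _ c ha.2⟩

theorem no_maximal_nilpotent (N : TwoSidedIdeal (AA k)) (hN : IsNilpotentTwoSidedIdeal N) :
    ∃ N' : TwoSidedIdeal (AA k), IsNilpotentTwoSidedIdeal N' ∧ N < N' := by
  obtain ⟨m, hm, h0⟩ := hN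
  have hs : ∃ s, eW k (wd 0 [s] 0) ∉ N := by
    by_contra hc
    push_neg at hc
    obtain ⟨m', hmm⟩ : ∃ m', m = m' + 1 := ⟨m - 1, by omega⟩
    subst hmm
    obtain ⟨f, hfl⟩ := exists_fun_of_list ((factorList m').map (eW k))
      (by rw [List.length_map, factorList_length])
    have hmem : ∀ i, f i ∈ N := by
      intro i
      have h1 : f i ∈ List.ofFn f := by rw [List.mem_ofFn]; exact ⟨i, rfl⟩
      rw [hfl, List.mem_map] at h1
      obtain ⟨w, hw, heq⟩ := h1
      rw [← heq]
      obtain ⟨ix, v, rfl⟩ := factorList_decomp m' w hw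
      rw [eW_mul]
      exact N.mul_mem_right _ _ (hc ix)
    have hz := h0 f hmem
    rw [hfl, eW_factorList_prod] at hz
    exact eW_ne_zero k (good_Pw m') hz
  obtain ⟨s, hs⟩ := hs
  set nn := Submodule.span k (N : Set (AA k)) with hnn_def
  set ii := Submodule.span k (Iset k s) with hii_def
  have hnn : nn ^ m = ⊥ := span_pow_eq_bot k (fun f hf => h0 f (fun i => hf i))
  have hIT : ii * ⊤ * ii = ⊥ := iN_top_iN k s
  refine ⟨TwoSidedIdeal.mk' (↑(nn ⊔ ii) : Set (AA k))
    (by rw [SetLike.mem_coe]; exact zero_mem _)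
    (fun hx hy => by rw [SetLike.mem_coe] at *; exact add_mem hx hy)
    (fun hx => by rw [SetLike.mem_coe] at *; exact neg_mem hx)
    (fun {x y} hy => by
      rw [SetLike.mem_coe] at *
      obtain ⟨a, ha, b, hb, rfl⟩ := Submodule.mem_sup.1 hy
      rw [mul_add]
      exact Submodule.mem_sup.2 ⟨x * a, (span_N_mul_closed k N x ha).1,
        x * b, (span_Iset_mul_closed k s x hb).1, rfl⟩)
    (fun {x y} hx => by
      rw [SetLike.mem_coe] at *
      obtain ⟨a, ha, b, hb, rfl⟩ := Submodule.mem_sup.1 hx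
      rw [add_mul]
      exact Submodule.mem_sup.2 ⟨a * y, (span_N_mul_closed k N y ha).2,
        b * y, (span_Iset_mul_closed k s y hb).2, rfl⟩), ?_, ?_⟩
  · refine ⟨2*m+1, by omega, fun f hf => ?_⟩
    have h1 : (List.ofFn f).prod ∈ (nn ⊔ ii) ^ (List.ofFn f).length := by
      refine list_prod_mem_pow k _ _ (fun a ha => ?_)
      rw [List.mem_ofFn] at ha
      obtain ⟨i, rfl⟩ := ha
      have := hf i
      rwa [TwoSidedIdeal.mem_mk', SetLike.mem_coe] at this
    rw [List.length_ofFn, sup_pow_eq_bot k nn ii hm hnn hIT] at h1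
    simpa using h1
  · rw [SetLike.lt_iff_le_and_exists]
    constructor
    · intro x hx
      rw [TwoSidedIdeal.mem_mk', SetLike.mem_coe]
      exact Submodule.mem_sup_left (Submodule.subset_span (by rwa [SetLike.mem_coe]))
    · refine ⟨eW k (wd 0 [s] 0), ?_, hs⟩
      rw [TwoSidedIdeal.mem_mk', SetLike.mem_coe]
      refine Submodule.mem_sup_right (Submodule.subset_span ⟨wd 0 [s] 0, ?_, rfl⟩)
      show s ∈ gaps (wd 0 [s] 0)
      simp [gaps]


namespace Wd

/-- `seg g r = [g, g-1, ..., g-r+1]`. -/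
def seg : ℕ → ℕ → List ℕ
  | _, 0 => []
  | g, (r+1) => g :: seg (g-1) r

lemma seg_of_chain : ∀ gs : List ℕ, List.Chain' step gs → gs = seg (gs.headD 0) gs.length := by
  intro gs
  induction gs with
  | nil => intro _; rfl
  | cons g t ih =>
    intro h
    cases t with
    | nil => rfl
    | cons g' t' =>
      have h1 : g = g' + 1 := (List.isChain_cons_cons.1 h).1
      have h2 := ih (List.isChain_cons_cons.1 h).2
      show _ = g :: seg (g-1) (t'.length + 1)
      rw [show g - 1 = g' from by omega]
      exact congrArg _ h2

def firstRun : Wd → ℕ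
  | xs a => a
  | wd a _ _ => a

def headGap : Wd → ℕ
  | xs _ => 0
  | wd _ gs _ => gs.headD 0

/-- good words are determined by their parameters. -/
lemma good_eq_of_params {u v : Wd} (hu : Good u) (hv : Good v) (h1 : countY u = countY v)
    (h2 : firstRun u = firstRun v) (h3 : headGap u = headGap v) (h4 : len u = len v) : u = v := by
  cases u with
  | xs a =>
    cases v with
    | xs c => simp only [len] at h4; rw [h4]
    | wd c hs d => simp [countY] at h1
  | wd a gs b =>
    cases v with
    | xs c => simp [countY] at h1
    | wd c hs d =>
      simp only [countY] at h1
      simp only [firstRun] at h2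
      simp only [headGap] at h3
      have hgs : gs = hs := by
        have e1 := seg_of_chain gs hu
        have e2 := seg_of_chain hs hv
        rw [e1, e2, h3, show gs.length = hs.length from by omega]
      subst hgs
      subst h2
      simp only [len] at h4
      have : b = d := by omega
      rw [this]

lemma countY_le_len (w : Wd) : countY w ≤ len w := by
  cases w <;> simp [countY, len] <;> omega

lemma firstRun_le_len (w : Wd) : firstRun w ≤ len w := by
  cases w <;> simp [firstRun, len] <;> omega

lemma headGap_le_len (w : Wd) : headGap w ≤ len w := by
  cases w with
  | xs a => simp [headGap, len]
  | wd a gs b =>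
    simp only [headGap, len]
    cases gs with
    | nil => simp
    | cons g t =>
      have : g ≤ (g :: t).sum := single_le_sum_gaps (by simp)
      simp only [List.headD_cons]
      omega

/-- reconstruction of a good word from its parameters -/
def decode (c a g l : ℕ) : Wd :=
  if c = 0 then xs l
  else wd a (seg g (c - 1)) (l - (a + (seg g (c-1)).sum + c))

lemma decode_eq {w : Wd} (hw : Good w) :
    decode (countY w) (firstRun w) (headGap w) (len w) = w := by
  cases w with
  | xs a => rfl
  | wd a gs b =>
    rw [decode, if_neg (by simp [countY])]
    simp only [countY, firstRun, headGap, len, Nat.add_sub_cancel]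
    have hseg : seg (gs.headD 0) gs.length = gs := (seg_of_chain gs hw).symm
    rw [hseg]
    congr 1
    omega

end Wd

/-- The generating subspace. -/
noncomputable def Vgen : Submodule k (AA k) :=
  Submodule.span k {(1 : AA k), eW k wx, eW k wy}

lemma Vgen_le_Wset : Vgen k ≤ Submodule.span k (Wset k 1) := by
  refine Submodule.span_le.2 ?_
  intro x hx
  rcases hx with rfl | rfl | rfl
  · rw [← eW_one k]
    exact Submodule.subset_span ⟨1, by simp [len, one_def], rfl⟩
  · exact Submodule.subset_span ⟨wx, by simp [len, wx], rfl⟩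
  · exact Submodule.subset_span ⟨wy, by simp [len, wy], rfl⟩

lemma Wset_mul_Wset (L L' : ℕ) : Wset k L * Wset k L' ⊆ Wset k (L + L') := by
  rintro z hz
  rw [Set.mem_mul] at hz
  obtain ⟨x, ⟨u, hu, rfl⟩, y, ⟨v, hv, rfl⟩, rfl⟩ := hz
  simp only [Set.mem_setOf_eq] at hu hv
  exact ⟨u * v, by rw [Set.mem_setOf_eq, len_mul]; omega, eW_mul k u v⟩

lemma Vgen_pow_le (n : ℕ) : Vgen k ^ n ≤ Submodule.span k (Wset k n) := by
  induction n with
  | zero =>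
    rw [pow_zero]
    rw [Submodule.one_eq_span]
    refine Submodule.span_le.2 ?_
    intro x hx
    rw [Set.mem_singleton_iff] at hx
    subst hx
    rw [← eW_one k]
    exact Submodule.subset_span ⟨1, by simp [len, one_def], rfl⟩
  | succ n ih =>
    rw [pow_succ]
    calc Vgen k ^ n * Vgen k ≤ Submodule.span k (Wset k n) * Submodule.span k (Wset k 1) :=
          mul_le_mul' ih (Vgen_le_Wset k)
      _ = Submodule.span k (Wset k n * Wset k 1) := Submodule.span_mul_span k _ _
      _ ≤ Submodule.span k (Wset k (n + 1)) := Submodule.span_mono (Wset_mul_Wset k n 1)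

/-- decoder map with bounded parameters -/
noncomputable def G (n : ℕ) (t : Fin (n+1) × Fin (n+1) × Fin (n+1) × Fin (n+1)) : AA k :=
  eW k (decode t.1 t.2.1 t.2.2.1 t.2.2.2)

lemma Wset_subset_range (n : ℕ) :
    Wset k n ⊆ insert 0 (Set.range (G k n)) := by
  rintro z ⟨w, hw, rfl⟩
  simp only [Set.mem_setOf_eq] at hw
  by_cases hg : Good w
  · right
    refine ⟨(⟨countY w, by have := countY_le_len w; omega⟩,
      ⟨firstRun w, by have := firstRun_le_len w; omega⟩,
      ⟨headGap w, by have := headGap_le_len w; omega⟩,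
      ⟨len w, by omega⟩), ?_⟩
    show eW k (decode _ _ _ _) = eW k w
    rw [decode_eq hg]
  · left
    exact eW_eq_zero k hg

lemma Vgen_finite : Module.Finite k ↥(Vgen k) :=
  FiniteDimensional.span_of_finite k (Set.toFinite _)

lemma finrank_Vgen_pow_le (n : ℕ) :
    Module.finrank k ↥(Vgen k ^ n) ≤ (n+1)^4 := by
  classical
  haveI : Module.Finite k ↥(Submodule.span k (Set.range (G k n))) :=
    FiniteDimensional.span_of_finite k (Set.finite_range _)
  have h1 : Vgen k ^ n ≤ Submodule.span k (Set.range (G k n)) := by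
    refine le_trans (Vgen_pow_le k n) ?_
    refine le_trans (Submodule.span_mono (Wset_subset_range k n)) ?_
    rw [Submodule.span_insert_zero]
  have h2 := Submodule.finrank_mono h1
  refine le_trans h2 ?_
  have h3 : Set.range (G k n) = ↑(Finset.image (G k n) Finset.univ) := by
    rw [Finset.coe_image, Finset.coe_univ, Set.image_univ]
  rw [h3]
  refine le_trans (finrank_span_finset_le_card _) ?_
  refine le_trans (Finset.card_image_le) ?_
  simp [Finset.card_univ]
  ring_nf
  omega


lemma eW_pow (u : Wd) (n : ℕ) : eW k (u ^ n) = (eW k u) ^ n := map_pow (eWm k) u n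

lemma eW_mem_adjoin : ∀ w : Wd, eW k w ∈ Algebra.adjoin k {eW k wx, eW k wy} := by
  have hx : eW k wx ∈ Algebra.adjoin k {eW k wx, eW k wy} := Algebra.subset_adjoin (by simp)
  have hy : eW k wy ∈ Algebra.adjoin k {eW k wx, eW k wy} := Algebra.subset_adjoin (by simp)
  have hxs : ∀ a : ℕ, eW k (xs a) ∈ Algebra.adjoin k {eW k wx, eW k wy} := by
    intro a
    rw [xs_eq_pow, eW_pow]
    exact pow_mem hx a
  have key : ∀ gs : List ℕ, ∀ b : ℕ, eW k (wd 0 gs b) ∈ Algebra.adjoin k {eW k wx, eW k wy} := by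
    intro gs
    induction gs with
    | nil =>
      intro b
      rw [wd_zero_decomp, eW_mul]
      exact mul_mem hy (hxs b)
    | cons g t ih =>
      intro b
      rw [wd_zero_decomp]
      show eW k (wy * (xs g * wd 0 t b)) ∈ _
      rw [eW_mul, eW_mul]
      exact mul_mem hy (mul_mem (hxs g) (ih b))
  intro w
  cases w with
  | xs a => exact hxs a
  | wd a gs b =>
    rw [wd_decomp, eW_mul]
    exact mul_mem (hxs a) (key gs b)

lemma adjoin_xy_eq_top : Algebra.adjoin k {eW k wx, eW k wy} = ⊤ := by
  rw [eq_top_iff]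
  intro a _
  have h1 := mem_span_range k a
  have hle : Submodule.span k (Set.range (eW k)) ≤
      Subalgebra.toSubmodule (Algebra.adjoin k {eW k wx, eW k wy}) :=
    Submodule.span_le.2 (by rintro x ⟨w, rfl⟩; exact eW_mem_adjoin k w)
  exact hle h1

lemma fg_AA : ∃ s : Finset (AA k), Algebra.adjoin k (s : Set (AA k)) = ⊤ := by
  classical
  refine ⟨{eW k wx, eW k wy}, ?_⟩
  rw [show (({eW k wx, eW k wy} : Finset (AA k)) : Set (AA k))
    = {eW k wx, eW k wy} from by simp]
  exact adjoin_xy_eq_top k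

lemma gk_le_six : gkDimLE k (AA k) 6 := by
  refine ⟨Vgen k, Vgen_finite k, Submodule.subset_span (by simp), ?_, ?_⟩
  · rw [eq_top_iff, ← adjoin_xy_eq_top k]
    refine Algebra.adjoin_mono ?_
    intro x hx
    rcases hx with rfl | rfl
    · exact Submodule.subset_span (by simp)
    · exact Submodule.subset_span (by simp)
  · have hev : ∀ᶠ (n : ℕ) in Filter.atTop,
        (((Real.log (Module.finrank k ↥(Vgen k ^ n)) / Real.log n : ℝ)) : EReal)
          ≤ ((6:ℝ) : EReal) := by
      rw [Filter.eventually_atTop]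
      refine ⟨5, fun n hn => ?_⟩
      rw [EReal.coe_le_coe_iff]
      have hlog : 0 < Real.log n := Real.log_pos (by exact_mod_cast (by omega : 1 < n))
      rcases Nat.eq_zero_or_pos (Module.finrank k ↥(Vgen k ^ n)) with h0 | h0
      · rw [h0]
        norm_num
      · have hF : Module.finrank k ↥(Vgen k ^ n) ≤ (n+1)^4 := finrank_Vgen_pow_le k n
        have hn4 : (n+1)^4 ≤ n^6 := by
          calc (n+1)^4 ≤ (2*n)^4 := Nat.pow_le_pow_left (by omega) 4
            _ = 16 * n^4 := by ring
            _ ≤ n^2 * n^4 := by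
                refine Nat.mul_le_mul_right _ ?_
                have h16 : 4 * 4 ≤ n * n := Nat.mul_le_mul (by omega) (by omega)
                calc (16:ℕ) = 4 * 4 := by norm_num
                  _ ≤ n * n := h16
                  _ = n^2 := (sq n).symm
            _ = n^6 := by ring
        have h6 : ((Module.finrank k ↥(Vgen k ^ n) : ℕ) : ℝ) ≤ ((n:ℝ))^6 := by
          exact_mod_cast le_trans hF hn4
        have hlogF : Real.log (Module.finrank k ↥(Vgen k ^ n)) ≤ 6 * Real.log n := by
          calc Real.log (Module.finrank k ↥(Vgen k ^ n)) ≤ Real.log ((n:ℝ)^6) :=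
                Real.log_le_log (by exact_mod_cast h0) h6
            _ = 6 * Real.log n := by rw [Real.log_pow]; norm_num
        rw [div_le_iff₀ hlog]
        exact hlogF
    exact Filter.limsup_le_of_le (by isBoundedDefault) hev

end GKW

/-- Over a countable field `k` there is a finitely generated `k`-algebra of
Gelfand–Kirillov dimension at most six having a nil two-sided ideal that is not
nilpotent, and having no maximal nilpotent two-sided ideal. -/
theorem exists_fg_algebra_gk_le_six_nonnilpotent_nil_ideal_no_maximal_nilpotent
    (k : Type) [Field k] [Countable k] :
    ∃ (A : Type) (_ : Ring A) (_ : Algebra k A),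
      (∃ s : Finset A, Algebra.adjoin k (s : Set A) = ⊤) ∧
      gkDimLE k A 6 ∧
      (∃ J : TwoSidedIdeal A, (∀ x ∈ J, IsNilpotent x) ∧ ¬ IsNilpotentTwoSidedIdeal J) ∧
      (∀ N : TwoSidedIdeal A, IsNilpotentTwoSidedIdeal N →
        ∃ N' : TwoSidedIdeal A, IsNilpotentTwoSidedIdeal N' ∧ N < N') := by
  refine ⟨GKW.AA k, GKW.instRingAA k, GKW.instAlgebraAA k, GKW.fg_AA k, GKW.gk_le_six k,
    ⟨GKW.J k, GKW.J_nil k, GKW.J_not_nilpotent k⟩, GKW.no_maximal_nilpotent k⟩
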